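/- Let R be a commutative local ring and let v : Fin (n+1) → R be a vector in the free module R^(n+1) such that v i is a unit of R for some index i. Then there exists an R-basis b of R^(n+1) = (Fin (n+1) → R) with b 0 = v; that is, v can be completed to a basis of the free module R^(n+1). -/

import Mathlib

/-- Over a commutative local ring `R`, every vector of `R^(n+1)` having a unit coordinate
(a primitive vector) can be completed to a basis of the free module `R^(n+1)`. -/
theorem stmt4 (R : Type*) [CommRing R] [IsLocalRing R] (n : ℕ)
    (v : Fin (n + 1) → R) (hv : ∃ i, IsUnit (v i)) :
    ∃ b : Module.Basis (Fin (n + 1)) R (Fin (n + 1) → R), b 0 = v := by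
  obtain ⟨i, hi⟩ := hv
  set M : Matrix (Fin (n + 1)) (Fin (n + 1)) R := (1 : Matrix _ _ R).updateCol i v with hM
  have hdet : M.det = v i := by
    have h := congrFun (DFunLike.congr_fun (Matrix.cramer_one (n := Fin (n + 1)) (α := R)) v) i
    rw [Matrix.cramer_apply] at h
    rw [hM, h]
    rfl
  have hunit : IsUnit M.det := hdet ▸ hi
  have hinv : Invertible M := M.invertibleOfIsUnitDet hunit
  let e := M.toLinearEquiv' hinv
  let b := ((Pi.basisFun R (Fin (n + 1))).map e).reindex (Equiv.swap 0 i)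
  refine ⟨b, ?_⟩
  have : b 0 = e (Pi.basisFun R (Fin (n + 1)) i) := by
    simp [b, Equiv.swap_apply_left]
  rw [this]
  have he : e (Pi.basisFun R (Fin (n + 1)) i) = M.mulVec (Pi.single i 1) := by
    simp [e, Matrix.toLinearEquiv', Matrix.toLin'_apply]
  rw [he]
  ext k
  simp [Matrix.mulVec_single, hM, Matrix.updateCol_apply]
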